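/- If G₁ is r₁-regular with n₁ vertices and m₁ edges and G₂ is r₂-regular with n₂ vertices and m₂ edges, then EU(G₁+G₂) = √3·m₁·(r₁+n₂) + √3·m₂·(r₂+n₁) + n₁n₂·√((r₁+n₂)² + (r₂+n₁)² + (r₁+n₂)(r₂+n₁)). -/

import Mathlib

open Finset SimpleGraph
open scoped Classical

noncomputable def ESO {V : Type*} [Fintype V] (G : SimpleGraph V) : Real :=
  Finset.sum G.edgeSet.toFinset fun e =>
    Sym2.lift ⟨fun u v => ((G.degree u : Real) + (G.degree v : Real)) *
        Real.sqrt ((G.degree u : Real) ^ 2 + (G.degree v : Real) ^ 2),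
      fun u v => by
        dsimp only; rw [add_comm (G.degree u : Real), add_comm ((G.degree u : Real) ^ 2)]⟩ e

noncomputable def EU {V : Type*} [Fintype V] (G : SimpleGraph V) : Real :=
  Finset.sum G.edgeSet.toFinset fun e =>
    Sym2.lift ⟨fun u v => Real.sqrt ((G.degree u : Real) ^ 2 + (G.degree v : Real) ^ 2 +
        (G.degree u : Real) * (G.degree v : Real)),
      fun u v => by
        dsimp only; rw [mul_comm (G.degree u : Real), add_comm ((G.degree u : Real) ^ 2)]⟩ e

noncomputable def edgeCount {V : Type*} [Fintype V] (G : SimpleGraph V) : Nat :=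
  G.edgeSet.toFinset.card

def graphJoin {V1 V2 : Type*} (G1 : SimpleGraph V1) (G2 : SimpleGraph V2) :
    SimpleGraph (V1 ⊕ V2) where
  Adj x y :=
    match x, y with
    | Sum.inl a, Sum.inl b => G1.Adj a b
    | Sum.inr a, Sum.inr b => G2.Adj a b
    | Sum.inl _, Sum.inr _ => True
    | Sum.inr _, Sum.inl _ => True
  symm := by
    constructor
    rintro (a | a) (b | b) h
    · exact G1.adj_symm h
    · trivial
    · trivial
    · exact G2.adj_symm h
  loopless := by
    constructor
    rintro (a | a) h
    · exact (G1.ne_of_adj h) rfl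
    · exact (G2.ne_of_adj h) rfl


section Aux
variable {V1 V2 : Type*} [Fintype V1] [Fintype V2] (G1 : SimpleGraph V1) (G2 : SimpleGraph V2)

lemma join_adj_ll (a b : V1) : (graphJoin G1 G2).Adj (Sum.inl a) (Sum.inl b) ↔ G1.Adj a b := Iff.rfl
lemma join_adj_rr (a b : V2) : (graphJoin G1 G2).Adj (Sum.inr a) (Sum.inr b) ↔ G2.Adj a b := Iff.rfl
lemma join_adj_lr (a : V1) (b : V2) : (graphJoin G1 G2).Adj (Sum.inl a) (Sum.inr b) := trivial
lemma join_adj_rl (a : V2) (b : V1) : (graphJoin G1 G2).Adj (Sum.inr a) (Sum.inl b) := trivial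

lemma degree_inl (a : V1) : (graphJoin G1 G2).degree (Sum.inl a) = G1.degree a + Fintype.card V2 := by
  classical
  have h : (graphJoin G1 G2).neighborFinset (Sum.inl a) =
      (G1.neighborFinset a).map ⟨Sum.inl, Sum.inl_injective⟩ ∪
        (Finset.univ : Finset V2).map ⟨Sum.inr, Sum.inr_injective⟩ := by
    ext (b | b) <;> simp [join_adj_ll, join_adj_lr]
  rw [SimpleGraph.degree, h, Finset.card_union_of_disjoint, Finset.card_map, Finset.card_map,
    SimpleGraph.degree, Finset.card_univ]
  simp [Finset.disjoint_left]

lemma degree_inr (a : V2) : (graphJoin G1 G2).degree (Sum.inr a) = G2.degree a + Fintype.card V1 := by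
  classical
  have h : (graphJoin G1 G2).neighborFinset (Sum.inr a) =
      (G2.neighborFinset a).map ⟨Sum.inr, Sum.inr_injective⟩ ∪
        (Finset.univ : Finset V1).map ⟨Sum.inl, Sum.inl_injective⟩ := by
    ext (b | b) <;> simp [join_adj_rr, join_adj_rl]
  rw [SimpleGraph.degree, h, Finset.card_union_of_disjoint, Finset.card_map, Finset.card_map,
    SimpleGraph.degree, Finset.card_univ]
  simp [Finset.disjoint_left]

lemma sqrt3_helper {R : Real} (hR : 0 ≤ R) :
    Real.sqrt (R ^ 2 + R ^ 2 + R * R) = Real.sqrt 3 * R := by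
  rw [show R ^ 2 + R ^ 2 + R * R = 3 * R ^ 2 by ring,
    Real.sqrt_mul (by norm_num), Real.sqrt_sq hR]

lemma join_edge_decomp :
    (graphJoin G1 G2).edgeSet.toFinset =
      (G1.edgeFinset.map ⟨Sym2.map Sum.inl, Sym2.map.injective Sum.inl_injective⟩ ∪
       G2.edgeFinset.map ⟨Sym2.map Sum.inr, Sym2.map.injective Sum.inr_injective⟩) ∪
      (Finset.univ : Finset (V1 × V2)).map
        ⟨fun p => s(Sum.inl p.1, Sum.inr p.2),
          show Function.Injective (fun p : V1 × V2 => s(Sum.inl p.1, Sum.inr p.2)) from by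
          rintro ⟨a, b⟩ ⟨c, d⟩ h
          simp only [Sym2.eq_iff] at h
          rcases h with ⟨h1, h2⟩ | ⟨h1, h2⟩
          · simp_all
          · exact absurd h1 Sum.inl_ne_inr⟩ := by
  classical
  ext e
  refine Sym2.ind (fun x y => ?_) e
  cases x with
  | inl x => cases y with
    | inl y =>
      simp only [Set.mem_toFinset, mem_edgeSet, join_adj_ll, Finset.mem_union,
        Finset.mem_map, Function.Embedding.coeFn_mk, Finset.mem_univ, mem_edgeFinset]
      constructor
      · intro h
        exact Or.inl (Or.inl ⟨s(x, y), h, rfl⟩)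
      · rintro ((⟨e', he', heq⟩ | ⟨e', he', heq⟩) | ⟨⟨a, b⟩, _, heq⟩)
        · revert heq he'; refine Sym2.ind (fun u v => ?_) e'
          intro he' heq
          rw [Sym2.map_pair_eq, Sym2.eq_iff] at heq
          rcases heq with ⟨h1, h2⟩ | ⟨h1, h2⟩ <;>
            simp_all [mem_edgeFinset, SimpleGraph.adj_comm]
        · revert heq; refine Sym2.ind (fun u v => ?_) e'
          intro heq
          rw [Sym2.map_pair_eq, Sym2.eq_iff] at heq
          simp_all
        · rw [Sym2.eq_iff] at heq; simp_all
    | inr y =>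
      simp only [Set.mem_toFinset, mem_edgeSet, Finset.mem_union, Finset.mem_map,
        Function.Embedding.coeFn_mk, Finset.mem_univ, mem_edgeFinset]
      constructor
      · intro _
        exact Or.inr ⟨(x, y), trivial, rfl⟩
      · intro _; exact join_adj_lr G1 G2 x y
  | inr x => cases y with
    | inl y =>
      simp only [Set.mem_toFinset, mem_edgeSet, Finset.mem_union, Finset.mem_map,
        Function.Embedding.coeFn_mk, Finset.mem_univ, mem_edgeFinset]
      constructor
      · intro _
        exact Or.inr ⟨(y, x), trivial, Sym2.eq_swap⟩
      · intro _; exact join_adj_rl G1 G2 x y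
    | inr y =>
      simp only [Set.mem_toFinset, mem_edgeSet, join_adj_rr, Finset.mem_union,
        Finset.mem_map, Function.Embedding.coeFn_mk, Finset.mem_univ, mem_edgeFinset]
      constructor
      · intro h
        exact Or.inl (Or.inr ⟨s(x, y), h, rfl⟩)
      · rintro ((⟨e', he', heq⟩ | ⟨e', he', heq⟩) | ⟨⟨a, b⟩, _, heq⟩)
        · revert heq; refine Sym2.ind (fun u v => ?_) e'
          intro heq
          rw [Sym2.map_pair_eq, Sym2.eq_iff] at heq
          simp_all
        · revert heq he'; refine Sym2.ind (fun u v => ?_) e'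
          intro he' heq
          rw [Sym2.map_pair_eq, Sym2.eq_iff] at heq
          rcases heq with ⟨h1, h2⟩ | ⟨h1, h2⟩ <;>
            simp_all [mem_edgeFinset, SimpleGraph.adj_comm]
        · rw [Sym2.eq_iff] at heq; simp_all

end Aux

theorem eu_join_regular {V1 V2 : Type*} [Fintype V1] [Fintype V2]
    (G1 : SimpleGraph V1) (G2 : SimpleGraph V2) (r1 r2 : Nat)
    (h1 : G1.IsRegularOfDegree r1) (h2 : G2.IsRegularOfDegree r2) :
    EU (graphJoin G1 G2) =
      Real.sqrt 3 * (edgeCount G1 : Real) * ((r1 : Real) + Fintype.card V2) +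
      Real.sqrt 3 * (edgeCount G2 : Real) * ((r2 : Real) + Fintype.card V1) +
      (Fintype.card V1 : Real) * (Fintype.card V2 : Real) *
        Real.sqrt (((r1 : Real) + Fintype.card V2) ^ 2 + ((r2 : Real) + Fintype.card V1) ^ 2 +
          ((r1 : Real) + Fintype.card V2) * ((r2 : Real) + Fintype.card V1)) := by
  classical
  set R1 : Real := (r1 : Real) + Fintype.card V2 with hR1
  set R2 : Real := (r2 : Real) + Fintype.card V1 with hR2
  have hR1nn : (0 : Real) ≤ R1 := by positivity
  have hdl : ∀ a : V1, ((graphJoin G1 G2).degree (Sum.inl a) : Real) = R1 := by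
    intro a; rw [degree_inl, h1 a]; push_cast; rfl
  have hdr : ∀ a : V2, ((graphJoin G1 G2).degree (Sum.inr a) : Real) = R2 := by
    intro a; rw [degree_inr, h2 a]; push_cast; rfl
  have hdisj1 : Disjoint
      (G1.edgeFinset.map ⟨Sym2.map Sum.inl, Sym2.map.injective Sum.inl_injective⟩)
      (G2.edgeFinset.map ⟨Sym2.map Sum.inr, Sym2.map.injective Sum.inr_injective⟩) := by
    rw [Finset.disjoint_left]
    intro e hA hB
    simp only [Finset.mem_map, Function.Embedding.coeFn_mk] at hA hB
    obtain ⟨e1, -, rfl⟩ := hA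
    obtain ⟨e2, -, heq⟩ := hB
    revert heq
    refine Sym2.ind (fun u v => Sym2.ind (fun x y => ?_) e1) e2
    simp [Sym2.map_pair_eq, Sym2.eq_iff]
  have hdisj2 : Disjoint
      (G1.edgeFinset.map ⟨Sym2.map Sum.inl, Sym2.map.injective Sum.inl_injective⟩ ∪
       G2.edgeFinset.map ⟨Sym2.map Sum.inr, Sym2.map.injective Sum.inr_injective⟩)
      ((Finset.univ : Finset (V1 × V2)).map
        ⟨fun p => s(Sum.inl p.1, Sum.inr p.2),
          show Function.Injective (fun p : V1 × V2 => s(Sum.inl p.1, Sum.inr p.2)) from by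
          rintro ⟨a, b⟩ ⟨c, d⟩ h
          simp only [Sym2.eq_iff] at h
          rcases h with ⟨h1, h2⟩ | ⟨h1, h2⟩
          · simp_all
          · exact absurd h1 Sum.inl_ne_inr⟩) := by
    rw [Finset.disjoint_left]
    intro e hA hB
    simp only [Finset.mem_union, Finset.mem_map, Function.Embedding.coeFn_mk] at hA hB
    obtain ⟨⟨a, b⟩, -, heq⟩ := hB
    rcases hA with ⟨e1, -, rfl⟩ | ⟨e1, -, rfl⟩ <;> revert heq <;>
      refine Sym2.ind (fun u v => ?_) e1 <;>
      simp [Sym2.map_pair_eq, Sym2.eq_iff]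
  rw [EU, join_edge_decomp, Finset.sum_union hdisj2, Finset.sum_union hdisj1,
    Finset.sum_map, Finset.sum_map, Finset.sum_map]
  have hA : ∀ e ∈ G1.edgeFinset, (Sym2.lift ⟨fun u v =>
      Real.sqrt (((graphJoin G1 G2).degree u : Real) ^ 2 + ((graphJoin G1 G2).degree v : Real) ^ 2 +
        ((graphJoin G1 G2).degree u : Real) * ((graphJoin G1 G2).degree v : Real)), by
          intro u v; dsimp only
          rw [mul_comm (((graphJoin G1 G2).degree u : Real)),
            add_comm (((graphJoin G1 G2).degree u : Real) ^ 2)]⟩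
      (Sym2.map Sum.inl e) : Real) = Real.sqrt 3 * R1 := by
    intro e _
    refine Sym2.ind (fun u v => ?_) e
    rw [Sym2.map_pair_eq, Sym2.lift_mk]
    dsimp only
    rw [hdl, hdl, sqrt3_helper hR1nn]
  have hR2nn : (0 : Real) ≤ R2 := by positivity
  have hB : ∀ e ∈ G2.edgeFinset, (Sym2.lift ⟨fun u v =>
      Real.sqrt (((graphJoin G1 G2).degree u : Real) ^ 2 + ((graphJoin G1 G2).degree v : Real) ^ 2 +
        ((graphJoin G1 G2).degree u : Real) * ((graphJoin G1 G2).degree v : Real)), by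
          intro u v; dsimp only
          rw [mul_comm (((graphJoin G1 G2).degree u : Real)),
            add_comm (((graphJoin G1 G2).degree u : Real) ^ 2)]⟩
      (Sym2.map Sum.inr e) : Real) = Real.sqrt 3 * R2 := by
    intro e _
    refine Sym2.ind (fun u v => ?_) e
    rw [Sym2.map_pair_eq, Sym2.lift_mk]
    dsimp only
    rw [hdr, hdr, sqrt3_helper hR2nn]
  have hC : ∀ p ∈ (Finset.univ : Finset (V1 × V2)), (Sym2.lift ⟨fun u v =>
      Real.sqrt (((graphJoin G1 G2).degree u : Real) ^ 2 + ((graphJoin G1 G2).degree v : Real) ^ 2 +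
        ((graphJoin G1 G2).degree u : Real) * ((graphJoin G1 G2).degree v : Real)), by
          intro u v; dsimp only
          rw [mul_comm (((graphJoin G1 G2).degree u : Real)),
            add_comm (((graphJoin G1 G2).degree u : Real) ^ 2)]⟩
      (s(Sum.inl p.1, Sum.inr p.2)) : Real) =
      Real.sqrt (R1 ^ 2 + R2 ^ 2 + R1 * R2) := by
    rintro ⟨a, b⟩ -
    rw [Sym2.lift_mk]
    dsimp only
    rw [hdl, hdr]
  simp only [Function.Embedding.coeFn_mk]
  rw [Finset.sum_congr rfl hA, Finset.sum_congr rfl hB, Finset.sum_congr rfl hC,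
    Finset.sum_const, Finset.sum_const, Finset.sum_const, Finset.card_univ,
    Fintype.card_prod]
  have hc1 : G1.edgeFinset.card = edgeCount G1 := rfl
  have hc2 : G2.edgeFinset.card = edgeCount G2 := rfl
  rw [hc1, hc2]
  push_cast
  ring
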